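/- Let (d_i) be a real sequence converging to d, let (α_j) satisfy α_j > 0, α_j → 0, Σ α_j = ∞, and define the recursion x_{j+1} = x_j + α_j · sgn(d_{φ(j)} − x_j), where φ: ℕ → ℕ is strictly increasing (so d_{φ(j)} → d). Then x_j → d. -/

import Mathlib

open Filter

/-- Sign function: 1 if positive, -1 if negative, 0 at zero. -/
noncomputable def sgn (z : ℝ) : ℝ := if 0 < z then 1 else if z < 0 then -1 else 0

/-- If a sequence keeps decreasing by `α j` forever while staying above `c`,
with `∑ α` divergent, we get a contradiction. -/
lemma escape_aux (α : ℕ → ℝ)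
    (hαdiv : Tendsto (fun n => ∑ j ∈ Finset.range n, α j) atTop atTop)
    (x : ℕ → ℝ) (N : ℕ) (c : ℝ)
    (h : ∀ j, N ≤ j → c < x j ∧ x (j + 1) = x j - α j) : False := by
  have key : ∀ n, x (N + n) = x N - ∑ k ∈ Finset.range n, α (N + k) := by
    intro n
    induction n with
    | zero => simp
    | succ n ih =>
      have h2 := (h (N + n) (Nat.le_add_right _ _)).2
      rw [show N + (n + 1) = (N + n) + 1 from rfl, h2, ih, Finset.sum_range_succ]
      ring
  have htail : Tendsto (fun n => ∑ k ∈ Finset.range n, α (N + k)) atTop atTop := by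
    have hadd : Tendsto (fun n => N + n) atTop atTop := by
      simpa [Nat.add_comm] using tendsto_add_atTop_nat N
    have h1 : Tendsto (fun n => ∑ j ∈ Finset.range (N + n), α j) atTop atTop :=
      hαdiv.comp hadd
    have h2 : (fun n => ∑ k ∈ Finset.range n, α (N + k)) =
        fun n => (∑ j ∈ Finset.range (N + n), α j) - ∑ j ∈ Finset.range N, α j := by
      funext n
      rw [Finset.sum_range_add]
      ring
    rw [h2]
    exact tendsto_atTop_add_const_right atTop _ h1
  obtain ⟨n, hn⟩ := (tendsto_atTop.1 htail (x N - c + 1)).exists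
  have hc := (h (N + n) (Nat.le_add_right _ _)).1
  rw [key n] at hc
  linarith

theorem stmt_12 (d : ℕ → ℝ) (dlim : ℝ) (hd : Tendsto d atTop (nhds dlim))
    (α : ℕ → ℝ) (hαpos : ∀ j, 0 < α j) (hα0 : Tendsto α atTop (nhds 0))
    (hαdiv : Tendsto (fun n => ∑ j ∈ Finset.range n, α j) atTop atTop)
    (φ : ℕ → ℕ) (hφ : StrictMono φ)
    (x : ℕ → ℝ) (hx : ∀ j, x (j + 1) = x j + α j * sgn (d (φ j) - x j)) :
    Tendsto x atTop (nhds dlim) := by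
  rw [Metric.tendsto_atTop]
  intro ε hε
  set e := ε / 3 with he
  have he0 : 0 < e := by positivity
  have hdφ : Tendsto (fun j => d (φ j)) atTop (nhds dlim) := hd.comp hφ.tendsto_atTop
  obtain ⟨N1, hN1⟩ := Metric.tendsto_atTop.1 hdφ e he0
  obtain ⟨N2, hN2⟩ := Metric.tendsto_atTop.1 hα0 e he0
  set N := max N1 N2 with hN
  have hdN : ∀ j, N ≤ j → |d (φ j) - dlim| < e := fun j hj => by
    simpa [Real.dist_eq] using hN1 j (le_trans (le_max_left _ _) hj)
  have hαN : ∀ j, N ≤ j → α j < e := fun j hj => by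
    have := hN2 j (le_trans (le_max_right _ _) hj)
    rw [Real.dist_eq, sub_zero, abs_of_pos (hαpos j)] at this
    exact this
  -- Claim 1: invariance of the band |x j - dlim| ≤ 2e for j ≥ N
  have claim1 : ∀ j, N ≤ j → |x j - dlim| ≤ 2 * e → |x (j + 1) - dlim| ≤ 2 * e := by
    intro j hj hband
    have hd' := abs_lt.1 (hdN j hj)
    have hα' := hαN j hj
    have hαp := hαpos j
    have hband' := abs_le.1 hband
    rw [hx j]
    unfold sgn
    split_ifs with h1 h2
    · rw [abs_le]; constructor <;> nlinarith
    · rw [abs_le]; constructor <;> nlinarith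
    · rw [abs_le]; constructor <;> nlinarith
  -- Claim 2: eventually entering the band
  have claim2 : ∃ M, N ≤ M ∧ |x M - dlim| ≤ 2 * e := by
    by_contra hcon
    push_neg at hcon
    have hout : ∀ j, N ≤ j → 2 * e < |x j - dlim| := fun j hj => hcon j hj
    rcases lt_or_ge (x N) dlim with hlo | hhi
    · -- x N < dlim - 2e, sequence increases, apply escape_aux to -x
      have hbase : x N < dlim - 2 * e := by
        have h2 := hout N le_rfl
        rcases lt_or_ge (x N - dlim) 0 with h | h
        · rw [abs_of_neg h] at h2; linarith
        · rw [abs_of_nonneg h] at h2; linarith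
      have hstep : ∀ j, N ≤ j → x j < dlim - 2 * e ∧ x (j + 1) = x j + α j := by
        intro j hj
        induction j, hj using Nat.le_induction with
        | base =>
          refine ⟨hbase, ?_⟩
          rw [hx N]
          have hd' := abs_lt.1 (hdN N le_rfl)
          have hsgn : sgn (d (φ N) - x N) = 1 := by
            unfold sgn; rw [if_pos]; linarith
          rw [hsgn]; ring
        | succ j hj ih =>
          obtain ⟨ihlt, iheq⟩ := ih
          have hα' := hαN j hj
          have hnext_lt : x (j + 1) < dlim - e := by rw [iheq]; linarith
          have hnext : x (j + 1) < dlim - 2 * e := by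
            have h2 := hout (j + 1) (Nat.le_succ_of_le hj)
            rcases lt_or_ge (x (j + 1) - dlim) 0 with h | h
            · rw [abs_of_neg h] at h2; linarith
            · rw [abs_of_nonneg h] at h2; linarith
          refine ⟨hnext, ?_⟩
          rw [hx (j + 1)]
          have hd' := abs_lt.1 (hdN (j + 1) (Nat.le_succ_of_le hj))
          have hsgn : sgn (d (φ (j + 1)) - x (j + 1)) = 1 := by
            unfold sgn; rw [if_pos]; linarith
          rw [hsgn]; ring
      exact escape_aux α hαdiv (fun j => -x j) N (-(dlim - 2 * e))
        (fun j hj => ⟨by show -(dlim - 2 * e) < -x j; linarith [(hstep j hj).1],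
          by show -x (j + 1) = -x j - α j; rw [(hstep j hj).2]; ring⟩)
    · -- x N > dlim + 2e, sequence decreases
      have hbase : dlim + 2 * e < x N := by
        have h2 := hout N le_rfl
        rcases lt_or_ge (x N - dlim) 0 with h | h
        · rw [abs_of_neg h] at h2; linarith
        · rw [abs_of_nonneg h] at h2; linarith
      have hstep : ∀ j, N ≤ j → dlim + 2 * e < x j ∧ x (j + 1) = x j - α j := by
        intro j hj
        induction j, hj using Nat.le_induction with
        | base =>
          refine ⟨hbase, ?_⟩
          rw [hx N]
          have hd' := abs_lt.1 (hdN N le_rfl)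
          have hsgn : sgn (d (φ N) - x N) = -1 := by
            unfold sgn
            rw [if_neg (by linarith), if_pos (by linarith)]
          rw [hsgn]; ring
        | succ j hj ih =>
          obtain ⟨ihlt, iheq⟩ := ih
          have hα' := hαN j hj
          have hαp := hαpos j
          have hnext_gt : dlim + e < x (j + 1) := by rw [iheq]; linarith
          have hnext : dlim + 2 * e < x (j + 1) := by
            have h2 := hout (j + 1) (Nat.le_succ_of_le hj)
            rcases lt_or_ge (x (j + 1) - dlim) 0 with h | h
            · rw [abs_of_neg h] at h2; linarith
            · rw [abs_of_nonneg h] at h2; linarith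
          refine ⟨hnext, ?_⟩
          rw [hx (j + 1)]
          have hd' := abs_lt.1 (hdN (j + 1) (Nat.le_succ_of_le hj))
          have hsgn : sgn (d (φ (j + 1)) - x (j + 1)) = -1 := by
            unfold sgn
            rw [if_neg (by linarith), if_pos (by linarith)]
          rw [hsgn]; ring
      exact escape_aux α hαdiv x N (dlim + 2 * e) hstep
  obtain ⟨M, hNM, hM⟩ := claim2
  refine ⟨M, fun n hn => ?_⟩
  have hband : ∀ n, M ≤ n → |x n - dlim| ≤ 2 * e := by
    intro n hn
    induction n, hn using Nat.le_induction with
    | base => exact hM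
    | succ n hn ih => exact claim1 n (le_trans hNM hn) ih
  rw [Real.dist_eq]
  have := hband n hn
  rw [he] at *
  linarith
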